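/- Let m <= n be natural numbers, d >= 1, and let a : Fin m -> {0,1}^d and b : Fin n -> {0,1}^d be families of 0/1 vectors, viewed as vectors in R^d. Define A' : Fin n -> R^(2d) by A'_i = (a_i, 1 - a_i) (the concatenation of a_i with its coordinatewise complement) for i < m, and A'_i = 0 (the zero vector) for m <= i < n; define B'_j = (b_j, 1 - b_j) for all j < n. Then the minimum over all permutations sigma of Fin n of sum_{j < n} ||A'_j - B'_{sigma(j)}||_2 equals (n - m) * sqrt(d) + sqrt(2) * (the minimum over all injections pi : Fin m -> Fin n of sum_{i < m} ||a_i - b_{pi(i)}||_2). -/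

import Mathlib

open Finset

/-- Pairwise: the padded cost of matching `x` to `(y, 1-y)` via `(x,1-x)` is `√2` times the
original distance. -/
lemma pair_cost (d : ℕ) (x y : Fin d → ℝ) :
    Real.sqrt (∑ p : Fin d ⊕ Fin d,
        (Sum.elim x (fun t => 1 - x t) p - Sum.elim y (fun t => 1 - y t) p) ^ 2) =
      Real.sqrt 2 * Real.sqrt (∑ t, (x t - y t) ^ 2) := by
  rw [← Real.sqrt_mul (by norm_num : (0:ℝ) ≤ 2)]
  congr 1
  rw [Fintype.sum_sum_type]
  simp only [Sum.elim_inl, Sum.elim_inr]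
  rw [Finset.mul_sum]
  rw [← Finset.sum_add_distrib]
  apply Finset.sum_congr rfl
  intro t _
  ring

/-- Pairwise: cost of a zero vector against a padded 0/1 vector is `√d`. -/
lemma zero_cost (d : ℕ) (y : Fin d → ℝ) (hy : ∀ t, y t = 0 ∨ y t = 1) :
    Real.sqrt (∑ p : Fin d ⊕ Fin d,
        ((0:ℝ) - Sum.elim y (fun t => 1 - y t) p) ^ 2) = Real.sqrt d := by
  congr 1
  rw [Fintype.sum_sum_type]
  simp only [Sum.elim_inl, Sum.elim_inr]
  rw [← Finset.sum_add_distrib]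
  have : ∀ t : Fin d, ((0:ℝ) - y t) ^ 2 + (0 - (1 - y t)) ^ 2 = 1 := by
    intro t; rcases hy t with h | h <;> rw [h] <;> ring
  rw [Finset.sum_congr rfl (fun t _ => this t)]
  simp

theorem padded_emd_eq_asymmetric_emd (d m n : ℕ) (hd : 1 ≤ d) (hmn : m ≤ n)
    (a : Fin m → Fin d → ℝ) (b : Fin n → Fin d → ℝ)
    (ha : ∀ i t, a i t = 0 ∨ a i t = 1)
    (hb : ∀ j t, b j t = 0 ∨ b j t = 1) :
    (⨅ σ : Equiv.Perm (Fin n),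
        ∑ j : Fin n, Real.sqrt (∑ p : Fin d ⊕ Fin d,
          ((if h : (j : ℕ) < m then
              Sum.elim (a ⟨j, h⟩) (fun t => 1 - a ⟨j, h⟩ t) p
            else 0)
            - Sum.elim (b (σ j)) (fun t => 1 - b (σ j) t) p) ^ 2)) =
      ((n : ℝ) - (m : ℝ)) * Real.sqrt d +
        Real.sqrt 2 * ⨅ π : Fin m ↪ Fin n,
          ∑ i : Fin m, Real.sqrt (∑ t, (a i t - b (π i) t) ^ 2) := by
  classical
  set a' : Fin n → Fin d → ℝ :=
    fun j t => if h : (j : ℕ) < m then a ⟨j, h⟩ t else 0 with ha'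
  set G : (Fin m ↪ Fin n) → ℝ :=
    fun π => ∑ i : Fin m, Real.sqrt (∑ t, (a i t - b (π i) t) ^ 2) with hG
  set F : Equiv.Perm (Fin n) → ℝ :=
    fun σ => ∑ j : Fin n, Real.sqrt (∑ p : Fin d ⊕ Fin d,
          ((if h : (j : ℕ) < m then
              Sum.elim (a ⟨j, h⟩) (fun t => 1 - a ⟨j, h⟩ t) p
            else 0)
            - Sum.elim (b (σ j)) (fun t => 1 - b (σ j) t) p) ^ 2) with hF
  haveI : Nonempty (Fin m ↪ Fin n) := ⟨(Fin.castLEEmb hmn)⟩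
  set C : ℝ := ((n : ℝ) - (m : ℝ)) * Real.sqrt d with hC
  -- cardinality of the "padding" part
  have card_lt : (Finset.univ.filter (fun j : Fin n => (j : ℕ) < m)).card = m := by
    have himg : Finset.univ.filter (fun j : Fin n => (j : ℕ) < m)
        = (Finset.univ : Finset (Fin m)).image (Fin.castLE hmn) := by
      ext j
      simp only [Finset.mem_filter, Finset.mem_univ, true_and, Finset.mem_image]
      constructor
      · intro h; exact ⟨⟨j, h⟩, by ext; simp⟩
      · rintro ⟨i, -, rfl⟩; exact i.2
    rw [himg, Finset.card_image_of_injective _ (Fin.castLE_injective hmn)]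
    simp
  have card_not : (Finset.univ.filter (fun j : Fin n => ¬ (j : ℕ) < m)).card = n - m := by
    have := Finset.card_filter_add_card_filter_not
      (s := (Finset.univ : Finset (Fin n))) (p := fun j : Fin n => (j : ℕ) < m)
    rw [card_lt] at this
    simp only [Finset.card_univ, Fintype.card_fin] at this
    omega
  -- the key pointwise computation
  have key : ∀ σ : Equiv.Perm (Fin n),
      F σ = C + Real.sqrt 2 *
        G ((Fin.castLEEmb hmn).trans σ.toEmbedding) := by
    intro σ
    have step : ∀ j : Fin n,
        Real.sqrt (∑ p : Fin d ⊕ Fin d,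
          ((if h : (j : ℕ) < m then
              Sum.elim (a ⟨j, h⟩) (fun t => 1 - a ⟨j, h⟩ t) p
            else 0)
            - Sum.elim (b (σ j)) (fun t => 1 - b (σ j) t) p) ^ 2) =
        if (j : ℕ) < m then
          Real.sqrt 2 * Real.sqrt (∑ t, (a' j t - b (σ j) t) ^ 2)
        else Real.sqrt d := by
      intro j
      by_cases h : (j : ℕ) < m
      · simp only [dif_pos h, if_pos h]
        have hax : a' j = a ⟨j, h⟩ := by
          funext t; simp only [ha', dif_pos h]
        rw [hax]
        exact pair_cost d (a ⟨j, h⟩) (b (σ j))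
      · simp only [dif_neg h, if_neg h]
        have := zero_cost d (b (σ j)) (hb (σ j))
        simpa using this
    rw [hF]
    simp only []
    rw [Finset.sum_congr rfl (fun j _ => step j)]
    rw [Finset.sum_ite]
    have hpad : (∑ _j ∈ Finset.univ.filter (fun j : Fin n => ¬ (j : ℕ) < m),
        Real.sqrt d) = C := by
      rw [Finset.sum_const, card_not, hC, nsmul_eq_mul, Nat.cast_sub hmn]
    have hmatch : (∑ j ∈ Finset.univ.filter (fun j : Fin n => (j : ℕ) < m),
        Real.sqrt 2 * Real.sqrt (∑ t, (a' j t - b (σ j) t) ^ 2)) =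
        Real.sqrt 2 * G ((Fin.castLEEmb hmn).trans σ.toEmbedding) := by
      rw [hG]
      simp only [Function.Embedding.trans_apply, Equiv.coe_toEmbedding,
        Fin.castLEEmb_apply]
      rw [Finset.mul_sum]
      refine Finset.sum_bij
        (i := fun (j : Fin n) (hj : j ∈ Finset.univ.filter (fun j : Fin n => (j : ℕ) < m)) =>
          (⟨(j : ℕ), (Finset.mem_filter.mp hj).2⟩ : Fin m)) ?_ ?_ ?_ ?_
      · intro j hj; exact Finset.mem_univ _
      · intro j1 h1 j2 h2 heq
        exact Fin.ext (by simpa using heq)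
      · intro i _
        refine ⟨Fin.castLE hmn i, Finset.mem_filter.mpr ⟨Finset.mem_univ _, by simp [i.2]⟩, ?_⟩
        ext; simp
      · intro j hj
        have hjm := (Finset.mem_filter.mp hj).2
        have hax : a' j = a ⟨(j : ℕ), hjm⟩ := by
          funext t; simp only [ha', dif_pos hjm]
        have hcast : Fin.castLE hmn ⟨(j : ℕ), hjm⟩ = j := by ext; simp
        rw [hax, hcast]
    rw [hpad, hmatch, add_comm]
  -- extension of an embedding to a permutation
  have ext_emb : ∀ π : Fin m ↪ Fin n, ∃ σ : Equiv.Perm (Fin n),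
      ∀ i : Fin m, σ (Fin.castLE hmn i) = π i := by
    intro π
    let e1 : Fin m ≃ {x : Fin n // (x : ℕ) < m} :=
      { toFun := fun i => ⟨Fin.castLE hmn i, by simp [i.2]⟩
        invFun := fun x => ⟨(x : Fin n), x.2⟩
        left_inv := fun i => by ext; simp
        right_inv := fun x => by ext; simp }
    let e2 : Fin m ≃ {x : Fin n // x ∈ Set.range π} := Equiv.ofInjective π π.injective
    refine ⟨(e1.symm.trans e2).extendSubtype, fun i => ?_⟩
    have hmem : ((Fin.castLE hmn i : Fin n) : ℕ) < m := by simp [i.2]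
    have hrw := Equiv.extendSubtype_apply_of_mem (e1.symm.trans e2)
      (Fin.castLE hmn i) hmem
    rw [hrw]
    have h1 : e1.symm ⟨Fin.castLE hmn i, hmem⟩ = i := by
      apply e1.injective
      apply Subtype.ext
      simp [e1]
    simp only [Equiv.trans_apply, h1]
    rfl
  -- now the infimum manipulation
  have hbddF : BddBelow (Set.range F) := Set.Finite.bddBelow (Set.finite_range F)
  have hbddG : BddBelow (Set.range G) := Set.Finite.bddBelow (Set.finite_range G)
  apply le_antisymm
  · obtain ⟨π₀, -, hπ₀⟩ := Finset.exists_min_image Finset.univ G Finset.univ_nonempty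
    obtain ⟨σ₀, hσ₀⟩ := ext_emb π₀
    have hG0 : G ((Fin.castLEEmb hmn).trans σ₀.toEmbedding) = G π₀ := by
      rw [hG]
      apply Finset.sum_congr rfl
      intro i _
      simp only [Function.Embedding.trans_apply, Equiv.coe_toEmbedding,
        Fin.castLEEmb_apply, hσ₀]
    have h1 : (⨅ σ : Equiv.Perm (Fin n), F σ) ≤ F σ₀ := ciInf_le hbddF σ₀
    have h2 : G π₀ = ⨅ π : Fin m ↪ Fin n, G π := by
      apply le_antisymm
      · exact le_ciInf (fun π => hπ₀ π (Finset.mem_univ π))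
      · exact ciInf_le hbddG π₀
    calc (⨅ σ : Equiv.Perm (Fin n), F σ) ≤ F σ₀ := h1
      _ = C + Real.sqrt 2 * G π₀ := by rw [key σ₀, hG0]
      _ = C + Real.sqrt 2 * ⨅ π : Fin m ↪ Fin n, G π := by rw [h2]
  · apply le_ciInf
    intro σ
    rw [key σ]
    exact add_le_add_right
      (mul_le_mul_of_nonneg_left (ciInf_le hbddG _) (Real.sqrt_nonneg 2)) C
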